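/- With the notation above, both matrices I + S̃ and I − S̃ are positive semidefinite; equivalently, every eigenvalue of the symmetric (nd)×(nd) matrix S̃ = D^{-1/2} S D^{-1/2} lies in the interval [−1, 1]. -/

import Mathlib

open Matrix BigOperators

private lemma ortho_mulVec_dot {d : ℕ} (O : Matrix (Fin d) (Fin d) ℝ)
    (h : Oᵀ * O = 1) (v : Fin d → ℝ) : (O *ᵥ v) ⬝ᵥ (O *ᵥ v) = v ⬝ᵥ v := by
  rw [Matrix.dotProduct_mulVec, ← Matrix.vecMul_transpose, Matrix.vecMul_vecMul, h]
  simp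

/-- With the block-matrix setup of VDM, both `I + S̃` and `I - S̃` are
positive semidefinite; equivalently every eigenvalue of the symmetric matrix
`S̃ = D^{-1/2} S D^{-1/2}` lies in `[-1, 1]`. -/
theorem vdm_one_pm_Stilde_posSemidef
    (n d : ℕ) (hn : 1 ≤ n) (hd : 1 ≤ d)
    (w : Fin n → Fin n → ℝ)
    (hw_symm : ∀ i j, w i j = w j i)
    (hw_nonneg : ∀ i j, 0 ≤ w i j)
    (hw_diag : ∀ i, w i i = 0)
    (O : Fin n → Fin n → Matrix (Fin d) (Fin d) ℝ)
    (hO_orth : ∀ i j, (O i j)ᵀ * O i j = 1 ∧ O i j * (O i j)ᵀ = 1)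
    (hO_symm : ∀ i j, (O i j)ᵀ = O j i)
    (deg : Fin n → ℝ) (hdeg_def : ∀ i, deg i = ∑ j, w i j)
    (hdeg_pos : ∀ i, 0 < deg i)
    (Stil : Matrix (Fin n × Fin d) (Fin n × Fin d) ℝ)
    (hStil : ∀ p q, Stil p q =
      (w p.1 q.1 / Real.sqrt (deg p.1 * deg q.1)) * O p.1 q.1 p.2 q.2) :
    (1 + Stil).PosSemidef ∧ (1 - Stil).PosSemidef ∧
      ∀ (μ : ℝ) (v : Fin n × Fin d → ℝ), v ≠ 0 → Stil.mulVec v = μ • v →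
        -1 ≤ μ ∧ μ ≤ 1 := by
  have hsq : ∀ i, Real.sqrt (deg i) ≠ 0 := fun i =>
    Real.sqrt_ne_zero'.mpr (hdeg_pos i)
  have hsq_sq : ∀ i, Real.sqrt (deg i) * Real.sqrt (deg i) = deg i := fun i =>
    Real.mul_self_sqrt (hdeg_pos i).le
  -- symmetry of Stil
  have hsymm : Stil.IsHermitian := by
    ext p q
    simp only [conjTranspose_apply, hStil, star_trivial]
    rw [hw_symm q.1 p.1, mul_comm (deg q.1) (deg p.1), ← hO_symm p.1 q.1]
    rfl
  -- key positivity claim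
  have key : ∀ (ε : ℝ), ε = 1 ∨ ε = -1 → ∀ x : Fin n × Fin d → ℝ,
      0 ≤ x ⬝ᵥ x + ε * (x ⬝ᵥ Stil *ᵥ x) := by
    intro ε hε x
    have hε2 : ε * ε = 1 := by rcases hε with h | h <;> rw [h] <;> norm_num
    set Y : Fin n → Fin d → ℝ := fun i a => x (i, a) / Real.sqrt (deg i) with hY
    -- Step A
    have stepA : x ⬝ᵥ Stil *ᵥ x = ∑ i, ∑ j, w i j * (Y i ⬝ᵥ (O i j *ᵥ Y j)) := by
      simp only [dotProduct, Matrix.mulVec, hStil, Fintype.sum_prod_type,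
        Finset.mul_sum, Finset.sum_mul]
      refine Finset.sum_congr rfl fun i _ => ?_
      rw [Finset.sum_comm]
      refine Finset.sum_congr rfl fun j _ => ?_
      refine Finset.sum_congr rfl fun a _ => ?_
      refine Finset.sum_congr rfl fun b _ => ?_
      rw [Real.sqrt_mul (hdeg_pos i).le]
      simp only [hY]
      field_simp
    -- Step B
    have stepB : x ⬝ᵥ x = ∑ i, ∑ j, w i j * (Y i ⬝ᵥ Y i) := by
      rw [dotProduct, Fintype.sum_prod_type]
      refine Finset.sum_congr rfl fun i _ => ?_
      rw [← Finset.sum_mul, ← hdeg_def]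
      rw [dotProduct, Finset.mul_sum]
      refine Finset.sum_congr rfl fun a _ => ?_
      simp only [hY]
      rw [div_mul_div_comm, hsq_sq, mul_div_cancel₀ _ (hdeg_pos i).ne']
    -- Step C : swap
    have stepC : ∑ i, ∑ j, w i j * (Y i ⬝ᵥ Y i) = ∑ i, ∑ j, w i j * (Y j ⬝ᵥ Y j) := by
      rw [Finset.sum_comm]
      refine Finset.sum_congr rfl fun j _ => Finset.sum_congr rfl fun i _ => ?_
      rw [hw_symm]
    have main : 2 * (x ⬝ᵥ x + ε * (x ⬝ᵥ Stil *ᵥ x)) =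
        ∑ i, ∑ j, w i j * ((Y i + ε • (O i j *ᵥ Y j)) ⬝ᵥ (Y i + ε • (O i j *ᵥ Y j))) := by
      have expand : ∀ i j, w i j * ((Y i + ε • (O i j *ᵥ Y j)) ⬝ᵥ (Y i + ε • (O i j *ᵥ Y j)))
          = w i j * (Y i ⬝ᵥ Y i) + w i j * (Y j ⬝ᵥ Y j)
            + 2 * ε * (w i j * (Y i ⬝ᵥ (O i j *ᵥ Y j))) := by
        intro i j
        have horth := ortho_mulVec_dot (O i j) (hO_orth i j).1 (Y j)
        rw [add_dotProduct, dotProduct_add, dotProduct_add,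
          smul_dotProduct, smul_dotProduct, dotProduct_smul,
          dotProduct_smul, horth,
          dotProduct_comm (O i j *ᵥ Y j) (Y i)]
        simp only [smul_eq_mul]
        rcases hε with h | h <;> subst h <;> ring
      calc 2 * (x ⬝ᵥ x + ε * (x ⬝ᵥ Stil *ᵥ x))
          = (∑ i, ∑ j, w i j * (Y i ⬝ᵥ Y i)) + (∑ i, ∑ j, w i j * (Y j ⬝ᵥ Y j))
            + 2 * ε * (∑ i, ∑ j, w i j * (Y i ⬝ᵥ (O i j *ᵥ Y j))) := by
            rw [stepA, stepB, ← stepC]; ring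
        _ = ∑ i, ∑ j, (w i j * (Y i ⬝ᵥ Y i) + w i j * (Y j ⬝ᵥ Y j)
              + 2 * ε * (w i j * (Y i ⬝ᵥ (O i j *ᵥ Y j)))) := by
            simp [Finset.sum_add_distrib, Finset.mul_sum]
        _ = _ := by
            refine Finset.sum_congr rfl fun i _ => Finset.sum_congr rfl fun j _ => ?_
            rw [expand i j]
    have hnn : 0 ≤ 2 * (x ⬝ᵥ x + ε * (x ⬝ᵥ Stil *ᵥ x)) := by
      rw [main]
      refine Finset.sum_nonneg fun i _ => Finset.sum_nonneg fun j _ => ?_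
      refine mul_nonneg (hw_nonneg i j) ?_
      rw [dotProduct]
      exact Finset.sum_nonneg fun a _ => mul_self_nonneg _
    linarith
  have hplus : (1 + Stil).PosSemidef := by
    refine Matrix.PosSemidef.of_dotProduct_mulVec_nonneg ?_ ?_
    · exact (Matrix.isHermitian_one).add hsymm
    · intro x
      have := key 1 (Or.inl rfl) x
      simpa [Matrix.add_mulVec, Matrix.one_mulVec, dotProduct_add] using this
  have hminus : (1 - Stil).PosSemidef := by
    refine Matrix.PosSemidef.of_dotProduct_mulVec_nonneg ?_ ?_
    · exact (Matrix.isHermitian_one).sub hsymm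
    · intro x
      have := key (-1) (Or.inr rfl) x
      have h2 : x ⬝ᵥ (1 - Stil) *ᵥ x = x ⬝ᵥ x + (-1) * (x ⬝ᵥ Stil *ᵥ x) := by
        rw [Matrix.sub_mulVec, Matrix.one_mulVec, dotProduct_sub]; ring
      simpa [h2] using this
  refine ⟨hplus, hminus, ?_⟩
  intro μ v hv heig
  have hvv : 0 < v ⬝ᵥ v := by
    simpa using Matrix.dotProduct_star_self_pos_iff.mpr hv
  constructor
  · have := hplus.dotProduct_mulVec_nonneg v
    rw [Matrix.add_mulVec, Matrix.one_mulVec, dotProduct_add, heig,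
      dotProduct_smul] at this
    simp only [star_trivial, smul_eq_mul] at this
    nlinarith
  · have := hminus.dotProduct_mulVec_nonneg v
    rw [Matrix.sub_mulVec, Matrix.one_mulVec, dotProduct_sub, heig,
      dotProduct_smul] at this
    simp only [star_trivial, smul_eq_mul] at this
    nlinarith
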